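/- arXiv:2201.02930 — 2 statements merged into one kernel-verified Lean document; each statement's English description precedes it below -/
import Mathlib

section
/- Let a > 0. There exists a constant C(a) > 0 such that for every r₀ ∈ (0,1), setting R₀ = (1/6) √((a+1)/(2^a a)) (−log r₀)^{−a/2}, r₊ = r₀^{2^{2/a}} and r₋ = r₀^{(2/3)^{2/a}} (so that (−log r₊)^{a/2} = 2(−log r₀)^{a/2} and (−log r₋)^{a/2} = (2/3)(−log r₀)^{a/2}, and 0 < r₊ < r₋ < 1), one has ∫_{r₊}^{r₋} 2π a (a+1) dr / ( r (−log(r²))^{a+2} ) = C(a) · R₀^{2(a+1)/a}. -/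
open Real intervalIntegral

/-- Sharpness of the exponent in the main noncollapsing theorem (Example 3.1):
there is `C(a) > 0` such that for every `r₀ ∈ (0,1)`, with
`R₀ = (1/6)√((a+1)/(2^a a))(−log r₀)^{−a/2}`, `r₊ = r₀^{2^{2/a}}` and
`r₋ = r₀^{(2/3)^{2/a}}` (so `(−log r₊)^{a/2} = 2(−log r₀)^{a/2}`,
`(−log r₋)^{a/2} = (2/3)(−log r₀)^{a/2}` and `0 < r₊ < r₋ < 1`), the ω-area of the
annulus `{r₊ ≤ |z| ≤ r₋}` equals `C(a) · R₀^{2(a+1)/a}`. -/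
theorem annulus_area_sharp_exponent (a : ℝ) (ha : 0 < a) :
    ∃ C : ℝ, 0 < C ∧
      ∀ r₀ ∈ Set.Ioo (0 : ℝ) 1,
        let R₀ : ℝ := (1 / 6) * Real.sqrt ((a + 1) / (2 ^ a * a)) *
          (-Real.log r₀) ^ (-(a / 2))
        let rp : ℝ := r₀ ^ ((2 : ℝ) ^ (2 / a))
        let rm : ℝ := r₀ ^ (((2 : ℝ) / 3) ^ (2 / a))
        ((-Real.log rp) ^ (a / 2) = 2 * (-Real.log r₀) ^ (a / 2) ∧
          (-Real.log rm) ^ (a / 2) = (2 / 3) * (-Real.log r₀) ^ (a / 2) ∧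
          0 < rp ∧ rp < rm ∧ rm < 1) ∧
        (∫ r in rp..rm,
            2 * Real.pi * a * (a + 1) / (r * (-Real.log (r ^ 2)) ^ (a + 2))) =
          C * R₀ ^ (2 * (a + 1) / a) := by
  have ha1 : (0:ℝ) < a + 1 := by linarith
  have haa : a ≠ 0 := ne_of_gt ha
  set x : ℝ := 2 * (a + 1) / a with hx
  have hxpos : 0 < x := by positivity
  set B : ℝ := (1 / 6) * Real.sqrt ((a + 1) / (2 ^ a * a)) with hB
  have hBpos : 0 < B := by
    have h0 : (0:ℝ) < (a + 1) / (2 ^ a * a) := by positivity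
    have := Real.sqrt_pos.mpr h0
    rw [hB]; positivity
  have h12 : ((1:ℝ)/2) ^ x < 1 := Real.rpow_lt_one (by norm_num) (by norm_num) hxpos
  have h32 : (1:ℝ) < ((3:ℝ)/2) ^ x :=
    Real.one_lt_rpow_iff_of_pos (by norm_num) |>.mpr (Or.inl ⟨by norm_num, hxpos⟩)
  have hdiff : 0 < ((3:ℝ)/2) ^ x - ((1:ℝ)/2) ^ x := by linarith
  have h2neg : (0:ℝ) < (2:ℝ) ^ (-(a+1)) := Real.rpow_pos_of_pos (by norm_num) _
  have hBneg : 0 < B ^ (-x) := Real.rpow_pos_of_pos hBpos _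
  refine ⟨Real.pi * a * (2:ℝ) ^ (-(a+1)) * (((3:ℝ)/2) ^ x - ((1:ℝ)/2) ^ x) * B ^ (-x),
    by positivity, ?_⟩
  intro r₀ hr₀
  dsimp only
  obtain ⟨hr0, hr1⟩ := hr₀
  have hL : 0 < -Real.log r₀ := neg_pos.mpr (Real.log_neg hr0 hr1)
  set L : ℝ := -Real.log r₀ with hLdef
  set cp : ℝ := (2:ℝ) ^ (2 / a) with hcp
  set cm : ℝ := ((2:ℝ)/3) ^ (2 / a) with hcm
  have hcppos : 0 < cp := Real.rpow_pos_of_pos (by norm_num) _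
  have hcmpos : 0 < cm := Real.rpow_pos_of_pos (by norm_num) _
  have key2 : (2 / a) * (a / 2) = 1 := by field_simp
  have hlrp : -Real.log (r₀ ^ cp) = cp * L := by
    rw [Real.log_rpow hr0]; rw [hLdef]; ring
  have hlrm : -Real.log (r₀ ^ cm) = cm * L := by
    rw [Real.log_rpow hr0]; rw [hLdef]; ring
  have c1 : (cp * L) ^ (a/2) = 2 * L ^ (a/2) := by
    rw [Real.mul_rpow hcppos.le hL.le, hcp,
      ← Real.rpow_mul (by norm_num : (0:ℝ) ≤ 2), key2, Real.rpow_one]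
  have c2 : (cm * L) ^ (a/2) = (2/3) * L ^ (a/2) := by
    rw [Real.mul_rpow hcmpos.le hL.le, hcm,
      ← Real.rpow_mul (by norm_num : (0:ℝ) ≤ 2/3), key2, Real.rpow_one]
  have hrp_pos : 0 < r₀ ^ cp := Real.rpow_pos_of_pos hr0 _
  have hcmcp : cm < cp := by
    rw [hcp, hcm]
    exact Real.rpow_lt_rpow (by norm_num) (by norm_num) (by positivity)
  have hlt : r₀ ^ cp < r₀ ^ cm := Real.rpow_lt_rpow_of_exponent_gt hr0 hr1 hcmcp
  have hrm1 : r₀ ^ cm < 1 := Real.rpow_lt_one hr0.le hr1 hcmpos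
  refine ⟨⟨by rw [hlrp, c1], by rw [hlrm, c2], hrp_pos, hlt, hrm1⟩, ?_⟩
  -- now the integral computation
  have hle : r₀ ^ cp ≤ r₀ ^ cm := hlt.le
  have hmem : ∀ r ∈ Set.uIcc (r₀ ^ cp) (r₀ ^ cm), 0 < r ∧ r < 1 := by
    intro r hr
    rw [Set.uIcc_of_le hle] at hr
    exact ⟨lt_of_lt_of_le hrp_pos hr.1, lt_of_le_of_lt hr.2 hrm1⟩
  have hgpos : ∀ r : ℝ, 0 < r → r < 1 → 0 < -Real.log (r ^ 2) := by
    intro r h0 h1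
    have : Real.log (r ^ 2) = 2 * Real.log r := by
      rw [Real.log_pow]; push_cast; ring
    have hlr : Real.log r < 0 := Real.log_neg h0 h1
    rw [this]; linarith
  set F : ℝ → ℝ := fun r => Real.pi * a * (-Real.log (r ^ 2)) ^ (-(a+1)) with hF
  have hfun : (fun y : ℝ => -Real.log (y ^ 2)) = fun y => -(2 * Real.log y) := by
    funext y; rw [Real.log_pow]; push_cast; ring
  have hderiv : ∀ r ∈ Set.uIcc (r₀ ^ cp) (r₀ ^ cm),
      HasDerivAt F (2 * Real.pi * a * (a + 1) / (r * (-Real.log (r ^ 2)) ^ (a + 2))) r := by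
    intro r hr
    obtain ⟨h0, h1⟩ := hmem r hr
    have hg : 0 < -Real.log (r ^ 2) := hgpos r h0 h1
    have h1' : HasDerivAt (fun y : ℝ => -Real.log (y ^ 2)) (-(2 * r⁻¹)) r := by
      rw [hfun]
      exact ((Real.hasDerivAt_log h0.ne').const_mul (2:ℝ)).neg
    have h2' : HasDerivAt (fun t : ℝ => t ^ (-(a+1)))
        ((-(a+1)) * (-Real.log (r ^ 2)) ^ (-(a+1) - 1)) (-Real.log (r ^ 2)) :=
      Real.hasDerivAt_rpow_const (Or.inl hg.ne')
    have h3' := (h2'.comp r h1').const_mul (Real.pi * a)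
    refine HasDerivAt.congr_deriv h3' ?_
    symm
    have hne : ((-Real.log (r ^ 2)) ^ (a+2)) ≠ 0 := (Real.rpow_pos_of_pos hg _).ne'
    rw [show -(a+1) - 1 = -(a+2) by ring, Real.rpow_neg hg.le]
    field_simp
  have hcont : ContinuousOn
      (fun r : ℝ => 2 * Real.pi * a * (a + 1) / (r * (-Real.log (r ^ 2)) ^ (a + 2)))
      (Set.uIcc (r₀ ^ cp) (r₀ ^ cm)) := by
    apply ContinuousOn.div continuousOn_const
    · apply ContinuousOn.mul continuousOn_id
      apply ContinuousOn.rpow_const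
      · apply ContinuousOn.neg
        apply ContinuousOn.log
        · exact (continuousOn_id.pow 2)
        · intro r hr; exact pow_ne_zero 2 (hmem r hr).1.ne'
      · intro r hr; right; linarith
    · intro r hr
      obtain ⟨h0, h1⟩ := hmem r hr
      exact (mul_pos h0 (Real.rpow_pos_of_pos (hgpos r h0 h1) _)).ne'
  have hint := intervalIntegral.integral_eq_sub_of_hasDerivAt hderiv
    (hcont.intervalIntegrable)
  rw [hint]
  -- compute F at the endpoints
  have hglrm : -Real.log ((r₀ ^ cm) ^ 2) = 2 * cm * L := by
    rw [Real.log_pow, Real.log_rpow hr0]; push_cast; rw [hLdef]; ring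
  have hglrp : -Real.log ((r₀ ^ cp) ^ 2) = 2 * cp * L := by
    rw [Real.log_pow, Real.log_rpow hr0]; push_cast; rw [hLdef]; ring
  have expm : (2 * cm * L) ^ (-(a+1)) = (2:ℝ) ^ (-(a+1)) * ((3:ℝ)/2) ^ x * L ^ (-(a+1)) := by
    rw [Real.mul_rpow (by positivity) hL.le,
      Real.mul_rpow (by norm_num : (0:ℝ) ≤ 2) hcmpos.le]
    congr 1
    congr 1
    rw [hcm, ← Real.rpow_mul (by norm_num : (0:ℝ) ≤ 2/3)]
    have he : (2 / a) * (-(a+1)) = -x := by rw [hx]; field_simp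
    rw [he, Real.rpow_neg (by norm_num : (0:ℝ) ≤ 2/3),
      show ((2:ℝ)/3) = ((3:ℝ)/2)⁻¹ by norm_num,
      Real.inv_rpow (by norm_num : (0:ℝ) ≤ 3/2), inv_inv]
  have expp : (2 * cp * L) ^ (-(a+1)) = (2:ℝ) ^ (-(a+1)) * ((1:ℝ)/2) ^ x * L ^ (-(a+1)) := by
    rw [Real.mul_rpow (by positivity) hL.le,
      Real.mul_rpow (by norm_num : (0:ℝ) ≤ 2) hcppos.le]
    congr 1
    congr 1
    rw [hcp, ← Real.rpow_mul (by norm_num : (0:ℝ) ≤ 2)]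
    have he : (2 / a) * (-(a+1)) = -x := by rw [hx]; field_simp
    rw [he, Real.rpow_neg (by norm_num : (0:ℝ) ≤ 2), one_div,
      Real.inv_rpow (by norm_num : (0:ℝ) ≤ 2)]
  have hexp : -(a/2) * x = -(a+1) := by rw [hx]; field_simp
  have hRx : (B * L ^ (-(a/2))) ^ x = B ^ x * L ^ (-(a+1)) := by
    rw [Real.mul_rpow hBpos.le (Real.rpow_pos_of_pos hL _).le,
      ← Real.rpow_mul hL.le, hexp]
  have hBB : B ^ (-x) * B ^ x = 1 := by
    rw [← Real.rpow_add hBpos]; simp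
  rw [hF]
  dsimp only
  rw [hglrm, hglrp, expm, expp, hRx]
  linear_combination (-(Real.pi * a * (((3:ℝ)/2) ^ x - ((1:ℝ)/2) ^ x) *
    (2:ℝ) ^ (-(a+1)) * L ^ (-(a+1)))) * hBB
end

section
/- Let a > 0, p > 0 and define f(z) = a(a+1) / ( |z|² (−log(|z|²))^{a+2} ) for z ∈ ℂ with 0 < |z| < 1/2. Then the function z ↦ f(z) · (1 + |log f(z)|)^p is integrable on the punctured disk {z ∈ ℂ : 0 < |z| < 1/2} with respect to Lebesgue measure if and only if p < a + 1. -/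
open Real MeasureTheory Set

lemma prod_slice_iff (F : ℝ → ℝ) :
    IntegrableOn (fun q : ℝ × ℝ => F q.1) (Ioo (0:ℝ) (1/2) ×ˢ Ioo (-π) π) volume ↔
      IntegrableOn F (Ioo (0:ℝ) (1/2)) volume := by
  rw [IntegrableOn, Measure.volume_eq_prod, ← Measure.prod_restrict]
  constructor
  · intro h
    have hne : (volume.restrict (Ioo (-π) π)) ≠ 0 := by
      intro h0
      have h2 : volume (Ioo (-π) π) = 0 := by
        rw [← Measure.restrict_apply_univ, h0]; simp
      rw [Real.volume_Ioo] at h2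
      rw [ENNReal.ofReal_eq_zero] at h2
      linarith [Real.pi_pos]
    haveI : (ae (volume.restrict (Ioo (-π) π))).NeBot := ae_neBot.2 hne
    obtain ⟨y, hy⟩ := h.prod_left_ae.exists
    exact hy
  · intro h
    have h1 : Integrable (fun _ : ℝ => (1:ℝ)) (volume.restrict (Ioo (-π) π)) := by
      have : IntegrableOn (fun _ : ℝ => (1:ℝ)) (Ioo (-π) π) volume :=
        integrableOn_const (by rw [Real.volume_Ioo]; exact ENNReal.ofReal_ne_top)
      exact this
    simpa using Integrable.mul_prod h h1

lemma radial_iff (g : ℝ → ℝ) :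
    IntegrableOn (fun z : ℂ => g (‖z‖))
      {z : ℂ | 0 < ‖z‖ ∧ ‖z‖ < 1/2} volume ↔
      IntegrableOn (fun r => r * g r) (Ioo (0:ℝ) (1/2)) volume := by
  set S : Set ℂ := {z : ℂ | 0 < ‖z‖ ∧ ‖z‖ < 1/2} with hS
  set T : Set (ℝ × ℝ) := Ioo (0:ℝ) (1/2) ×ˢ Ioo (-π) π with hT
  have hTsub : T ⊆ Complex.polarCoord.target := by
    rw [Complex.polarCoord_target]
    exact Set.prod_mono Ioo_subset_Ioi_self le_rfl
  -- the difference S \ slitPlane is null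
  have hnull : volume (S \ Complex.slitPlane) = 0 := by
    have hsub : S \ Complex.slitPlane ⊆ Complex.measurableEquivRealProd ⁻¹' (univ ×ˢ ({0} : Set ℝ)) := by
      intro z hz
      have h2 := hz.2
      simp only [Complex.mem_slitPlane_iff, not_or, not_lt, not_ne_iff] at h2
      simp [Complex.measurableEquivRealProd_apply, h2.2]
    refine le_antisymm (le_trans (measure_mono hsub) ?_) zero_le
    rw [Complex.volume_preserving_equiv_real_prod.measure_preimage
      (MeasurableSet.univ.prod (measurableSet_singleton 0)).nullMeasurableSet]
    rw [Measure.volume_eq_prod, Measure.prod_prod, Real.volume_singleton, mul_zero]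
  have hae : (S : Set ℂ) =ᵐ[volume] ((S ∩ Complex.slitPlane : Set ℂ)) := by
    rw [MeasureTheory.ae_eq_set]
    constructor
    · rw [Set.diff_self_inter]; exact hnull
    · simp [Set.diff_eq_empty.mpr Set.inter_subset_left]
  -- function identification
  have hfun : ∀ p : ℝ × ℝ,
      Complex.measurableEquivRealProd.symm (polarCoord.symm p) = Complex.polarCoord.symm p := by
    intro p
    apply Complex.ext <;>
      simp [Complex.measurableEquivRealProd_symm_apply, polarCoord_symm_apply,
        Complex.polarCoord_symm_apply, Complex.cos_ofReal_re, Complex.sin_ofReal_re]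
  have himg : Complex.polarCoord.symm '' T = S ∩ Complex.slitPlane := by
    rw [Complex.polarCoord.symm_image_eq_source_inter_preimage hTsub]
    ext z
    simp only [Set.mem_inter_iff, Set.mem_preimage, Complex.polarCoord_source,
      Complex.polarCoord_apply, hT, Set.mem_prod, Set.mem_Ioo, hS, Set.mem_setOf_eq]
    constructor
    · rintro ⟨hz, ⟨h1, h2⟩, _⟩
      exact ⟨⟨h1, h2⟩, hz⟩
    · rintro ⟨⟨h1, h2⟩, hz⟩
      refine ⟨hz, ⟨h1, h2⟩, Complex.neg_pi_lt_arg z, ?_⟩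
      rw [Complex.arg_lt_pi_iff]
      rcases Complex.mem_slitPlane_iff.1 hz with h | h
      · exact Or.inl h.le
      · exact Or.inr h
  -- derivative data for real polar coordinates
  set B : ℝ × ℝ → ℝ × ℝ →L[ℝ] ℝ × ℝ := fun p =>
    LinearMap.toContinuousLinearMap (Matrix.toLin (Module.Basis.finTwoProd ℝ) (Module.Basis.finTwoProd ℝ)
      !![Real.cos p.2, -p.1 * Real.sin p.2; Real.sin p.2, p.1 * Real.cos p.2]) with hB
  have B_det : ∀ p, (B p).det = p.1 := by
    intro p
    conv_rhs => rw [← one_mul p.1, ← Real.cos_sq_add_sin_sq p.2]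
    simp only [hB, neg_mul, LinearMap.det_toContinuousLinearMap, LinearMap.det_toLin,
      Matrix.det_fin_two_of, sub_neg_eq_add]
    ring
  have hTm : MeasurableSet T := measurableSet_Ioo.prod measurableSet_Ioo
  have hinj : Set.InjOn polarCoord.symm T := by
    have := polarCoord.symm.injOn
    rw [OpenPartialHomeomorph.symm_source] at this
    exact this.mono (by rw [hT, polarCoord_target]; exact Set.prod_mono Ioo_subset_Ioi_self le_rfl)
  calc IntegrableOn (fun z : ℂ => g (‖z‖)) S volume
      ↔ IntegrableOn (fun z : ℂ => g (‖z‖)) (S ∩ Complex.slitPlane) volume := by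
        rw [IntegrableOn, IntegrableOn, Measure.restrict_congr_set hae]
    _ ↔ IntegrableOn (fun z : ℂ => g (‖z‖))
          (Complex.measurableEquivRealProd.symm '' (polarCoord.symm '' T)) volume := by
        rw [← Set.image_comp]
        rw [show (Complex.measurableEquivRealProd.symm ∘ polarCoord.symm) '' T
            = Complex.polarCoord.symm '' T from Set.image_congr fun p _ => hfun p]
        rw [himg]
    _ ↔ IntegrableOn ((fun z : ℂ => g (‖z‖)) ∘ Complex.measurableEquivRealProd.symm)
          (polarCoord.symm '' T) volume :=
        (MeasurePreserving.symm _ Complex.volume_preserving_equiv_real_prod).integrableOn_image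
          Complex.measurableEquivRealProd.symm.measurableEmbedding
    _ ↔ IntegrableOn (fun p => |(B p).det| •
          ((fun z : ℂ => g (‖z‖)) ∘ Complex.measurableEquivRealProd.symm)
            (polarCoord.symm p)) T volume :=
        integrableOn_image_iff_integrableOn_abs_det_fderiv_smul volume hTm
          (fun p _ => (hasFDerivAt_polarCoord_symm p).hasFDerivWithinAt) hinj _
    _ ↔ IntegrableOn (fun q : ℝ × ℝ => q.1 * g q.1) T volume := by
        apply integrableOn_congr_fun _ hTm
        intro p hp
        have hp1 : 0 < p.1 := hp.1.1
        simp only [Function.comp_apply, hfun p, Complex.norm_polarCoord_symm, smul_eq_mul,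
          B_det, abs_of_pos hp1]
    _ ↔ IntegrableOn (fun r : ℝ => r * g r) (Ioo (0:ℝ) (1/2)) volume :=
        prod_slice_iff (fun r => r * g r)


lemma subst_iff (F : ℝ → ℝ) :
    IntegrableOn F (Ioo (0:ℝ) (1/2)) volume ↔
      IntegrableOn (fun u => (Real.exp (-u/2) / 2) * F (Real.exp (-u/2)))
        (Ioi (2 * Real.log 2)) volume := by
  have himg : (fun u => Real.exp (-u/2)) '' (Ioi (2 * Real.log 2)) = Ioo (0:ℝ) (1/2) := by
    ext y
    constructor
    · rintro ⟨u, hu, rfl⟩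
      refine ⟨Real.exp_pos _, ?_⟩
      have h1 : -u/2 < -(Real.log 2) := by
        have := mem_Ioi.1 hu; linarith
      calc Real.exp (-u/2) < Real.exp (-(Real.log 2)) := Real.exp_lt_exp.2 h1
        _ = 1/2 := by rw [Real.exp_neg, Real.exp_log two_pos]; norm_num
    · rintro ⟨hy0, hy2⟩
      refine ⟨-2 * Real.log y, ?_, ?_⟩
      · have h1 : Real.log y < Real.log (1/2) := Real.log_lt_log hy0 hy2
        rw [show (1:ℝ)/2 = 2⁻¹ by norm_num, Real.log_inv] at h1
        simp only [mem_Ioi]; linarith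
      · show Real.exp (-(-2 * Real.log y)/2) = y
        rw [show -(-2 * Real.log y)/2 = Real.log y by ring, Real.exp_log hy0]
  have hderiv : ∀ u ∈ Ioi (2 * Real.log 2),
      HasDerivWithinAt (fun u => Real.exp (-u/2)) (Real.exp (-u/2) * (-(1/2)))
        (Ioi (2 * Real.log 2)) u := by
    intro u _
    have h1 : HasDerivAt (fun u : ℝ => -u/2) (-(1/2)) u := by
      have h0 := (hasDerivAt_id u).neg.div_const (2:ℝ)
      simpa [neg_div] using h0
    exact h1.exp.hasDerivWithinAt
  have hinj : Set.InjOn (fun u => Real.exp (-u/2)) (Ioi (2 * Real.log 2)) := by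
    intro u _ v _ h
    simp only [Real.exp_eq_exp] at h; linarith
  rw [← himg, integrableOn_image_iff_integrableOn_abs_deriv_smul measurableSet_Ioi hderiv hinj]
  have heq : (fun x => |Real.exp (-x/2) * (-(1/2))| • F (Real.exp (-x/2)))
      = fun u => (Real.exp (-u/2) / 2) * F (Real.exp (-u/2)) := by
    funext u
    rw [smul_eq_mul, abs_mul, abs_of_pos (Real.exp_pos _),
      show |(-(1/2) : ℝ)| = 1/2 by norm_num]
    ring
  rw [heq]

set_option maxHeartbeats 1000000 in
lemma threshold (C a p : ℝ) (hC : 0 < C) (ha : 0 < a) (hp : 0 < p) :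
    IntegrableOn
        (fun u => C/2 * u^(-(a+2)) * (1 + |Real.log C + u - (a+2) * Real.log u|)^p)
        (Ioi (2 * Real.log 2)) volume ↔ p < a + 1 := by
  set b : ℝ := 2 * Real.log 2 with hbdef
  have hb0 : 0 < b := by
    have := Real.log_pos one_lt_two; positivity
  have hb1 : 1 < b := by
    have := Real.log_two_gt_d9; rw [hbdef]; linarith
  set H : ℝ → ℝ := fun u => C/2 * u^(-(a+2)) * (1 + |Real.log C + u - (a+2) * Real.log u|)^p
    with hHdef
  have habsm : Measurable fun u : ℝ => 1 + |Real.log C + u - (a+2) * Real.log u| := by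
    apply Measurable.const_add
    apply Measurable.abs
    apply Measurable.sub
    · exact measurable_const.add measurable_id
    · exact Real.measurable_log.const_mul _
  have hHm : Measurable H := by
    rw [hHdef]
    exact (measurable_const.mul (Measurable.pow measurable_id measurable_const)).mul
      (Measurable.pow habsm measurable_const)
  constructor
  · -- integrable → p < a + 1
    intro hint
    by_contra hnp
    push_neg at hnp
    have e1 : ∀ᶠ u : ℝ in Filter.atTop, ‖(a+2) * Real.log u‖ ≤ 1/4 * ‖u‖ :=
      (Real.isLittleO_log_id_atTop.const_mul_left (a+2)).bound (by norm_num)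
    have e2 : ∀ᶠ u : ℝ in Filter.atTop, |Real.log C| ≤ 1/4 * u :=
      Filter.eventually_atTop.2 ⟨4*|Real.log C|, fun u hu => by linarith⟩
    obtain ⟨u₁, hu₁⟩ := Filter.eventually_atTop.1 (e1.and e2)
    set u₂ : ℝ := max u₁ b with hu₂def
    have hu₂0 : 0 < u₂ := lt_of_lt_of_le hb0 (le_max_right _ _)
    have hsub : IntegrableOn H (Ioi u₂) volume :=
      hint.mono_set (Ioi_subset_Ioi (le_max_right _ _))
    have hmin : IntegrableOn (fun u => (C/2/2^p) * u^(p-(a+2))) (Ioi u₂) volume := by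
      have hmm : Measurable fun u : ℝ => (C/2/2^p) * u^(p-(a+2)) :=
        measurable_const.mul (Measurable.pow measurable_id measurable_const)
      refine Integrable.mono hsub hmm.aestronglyMeasurable ?_
      rw [ae_restrict_iff' measurableSet_Ioi]
      refine Filter.Eventually.of_forall fun u hu => ?_
      have hu1 : 1 < u := lt_trans (lt_of_lt_of_le hb1 (le_max_right _ _)) hu
      have hu0 : 0 < u := lt_trans one_pos hu1
      obtain ⟨hb1', hb2'⟩ := hu₁ u (le_trans (le_max_left _ _) (le_of_lt hu))
      rw [Real.norm_eq_abs, Real.norm_eq_abs] at hb1' ⊢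
      rw [abs_of_pos hu0] at hb1'
      -- lower bound for the log factor
      have hX : u/2 ≤ |Real.log C + u - (a+2) * Real.log u| := by
        have h1 : u/2 ≤ Real.log C + u - (a+2) * Real.log u := by
          have h2 := neg_abs_le (Real.log C)
          have h3 := le_abs_self ((a+2) * Real.log u)
          linarith
        exact le_trans h1 (le_abs_self _)
      have hfrac : (0:ℝ) < C/2/2^p := by positivity
      have hHnn : 0 ≤ H u := by
        rw [hHdef]
        have h4 : (0:ℝ) ≤ 1 + |Real.log C + u - (a+2) * Real.log u| := by positivity
        have h5 : (0:ℝ) ≤ u ^ (-(a+2)) := Real.rpow_nonneg hu0.le _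
        positivity
      have hmnn : 0 ≤ (C/2/2^p) * u^(p-(a+2)) := by
        have h5 : (0:ℝ) ≤ u ^ (p-(a+2)) := Real.rpow_nonneg hu0.le _
        positivity
      rw [abs_of_nonneg hmnn, abs_of_nonneg hHnn]
      -- compare
      have key : (C/2/2^p) * u^(p-(a+2)) = C/2 * u^(-(a+2)) * (u/2)^p := by
        rw [Real.div_rpow hu0.le (by norm_num : (0:ℝ) ≤ 2),
          show p - (a+2) = -(a+2) + p by ring, Real.rpow_add hu0]
        field_simp
      rw [key, hHdef]
      apply mul_le_mul_of_nonneg_left _ (by positivity :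
        (0:ℝ) ≤ C/2 * u^(-(a+2)))
      · exact Real.rpow_le_rpow (by positivity) (by linarith) hp.le
    have hpow : IntegrableOn (fun u : ℝ => u^(p-(a+2))) (Ioi u₂) volume := by
      have h6 := hmin.const_mul ((C/2/2^p)⁻¹)
      have hfrac : (0:ℝ) < C/2/2^p := by positivity
      have heq : (fun u : ℝ => (C/2/2^p)⁻¹ * ((C/2/2^p) * u^(p-(a+2))))
          = fun u : ℝ => u^(p-(a+2)) := by
        funext u; field_simp
      rwa [heq] at h6
    rw [integrableOn_Ioi_rpow_iff hu₂0] at hpow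
    linarith
  · -- p < a + 1 → integrable
    intro hlt
    set K : ℝ := 1 + |Real.log C| + a + 3 with hKdef
    have hK1 : 1 ≤ K := by
      have := abs_nonneg (Real.log C); rw [hKdef]; linarith
    have hmaj : IntegrableOn (fun u : ℝ => (C/2 * K^p) * u^(p-(a+2))) (Ioi b) volume :=
      (integrableOn_Ioi_rpow_of_lt (by linarith) hb0).const_mul _
    refine Integrable.mono hmaj hHm.aestronglyMeasurable ?_
    rw [ae_restrict_iff' measurableSet_Ioi]
    refine Filter.Eventually.of_forall fun u hu => ?_
    have hu1 : 1 < u := lt_trans hb1 hu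
    have hu0 : 0 < u := lt_trans one_pos hu1
    have hlogu : Real.log u ≤ u := le_trans (Real.log_le_sub_one_of_pos hu0) (by linarith)
    have hlogu0 : 0 ≤ Real.log u := Real.log_nonneg hu1.le
    have hX : 1 + |Real.log C + u - (a+2) * Real.log u| ≤ K * u := by
      have habs : |Real.log C + u - (a+2) * Real.log u|
          ≤ |Real.log C| + u + (a+2) * Real.log u := by
        cases' abs_cases (Real.log C + u - (a+2) * Real.log u) with h h <;> rw [h.1] <;>
          nlinarith [le_abs_self (Real.log C), neg_abs_le (Real.log C)]
      have h7 : 0 ≤ (u - 1) * |Real.log C| :=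
        mul_nonneg (by linarith) (abs_nonneg _)
      have h8 : 0 ≤ (a+2) * (u - Real.log u) :=
        mul_nonneg (by linarith) (by linarith)
      rw [hKdef]; nlinarith
    have hHnn : 0 ≤ H u := by
      rw [hHdef]
      have h4 : (0:ℝ) ≤ 1 + |Real.log C + u - (a+2) * Real.log u| := by positivity
      have h5 : (0:ℝ) ≤ u ^ (-(a+2)) := Real.rpow_nonneg hu0.le _
      positivity
    have hmnn : 0 ≤ (C/2 * K^p) * u^(p-(a+2)) := by
      have h5 : (0:ℝ) ≤ u ^ (p-(a+2)) := Real.rpow_nonneg hu0.le _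
      positivity
    rw [Real.norm_eq_abs, Real.norm_eq_abs, abs_of_nonneg hHnn, abs_of_nonneg hmnn]
    calc H u ≤ C/2 * u^(-(a+2)) * (K*u)^p := by
          rw [hHdef]
          refine mul_le_mul_of_nonneg_left (Real.rpow_le_rpow (by positivity) hX hp.le) ?_
          exact mul_nonneg (by positivity) (Real.rpow_nonneg hu0.le _)
      _ = (C/2 * K^p) * u^(p-(a+2)) := by
          rw [Real.mul_rpow (by linarith : (0:ℝ) ≤ K) hu0.le,
            show p - (a+2) = -(a+2) + p by ring, Real.rpow_add hu0]
          ring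


/-- The `L¹(log L)^p` integrability threshold in Example 3.1: with
`f(z) = a(a+1)/(|z|²(−log(|z|²))^{a+2})` on the punctured disk
`{0 < |z| < 1/2}`, the function `f(1+|log f|)^p` is Lebesgue-integrable there
if and only if `p < a + 1`. -/
theorem orlicz_integrability_iff (a p : ℝ) (ha : 0 < a) (hp : 0 < p) :
    (IntegrableOn
        (fun z : ℂ =>
          (a * (a + 1) / (‖z‖ ^ 2 * (-Real.log (‖z‖ ^ 2)) ^ (a + 2))) *
            (1 + |Real.log (a * (a + 1) /
              (‖z‖ ^ 2 * (-Real.log (‖z‖ ^ 2)) ^ (a + 2)))|) ^ p)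
        {z : ℂ | 0 < ‖z‖ ∧ ‖z‖ < 1 / 2} volume) ↔
      p < a + 1 := by
  have hC : 0 < a * (a + 1) := mul_pos ha (by linarith)
  have hb0 : (0:ℝ) < 2 * Real.log 2 := by
    have := Real.log_pos one_lt_two; linarith
  rw [show (fun z : ℂ =>
          (a * (a + 1) / (‖z‖ ^ 2 * (-Real.log (‖z‖ ^ 2)) ^ (a + 2))) *
            (1 + |Real.log (a * (a + 1) /
              (‖z‖ ^ 2 * (-Real.log (‖z‖ ^ 2)) ^ (a + 2)))|) ^ p)
      = fun z : ℂ => (fun r : ℝ =>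
          (a * (a + 1) / (r ^ 2 * (-Real.log (r ^ 2)) ^ (a + 2))) *
            (1 + |Real.log (a * (a + 1) /
              (r ^ 2 * (-Real.log (r ^ 2)) ^ (a + 2)))|) ^ p) (‖z‖) from rfl]
  rw [radial_iff (fun r : ℝ =>
          (a * (a + 1) / (r ^ 2 * (-Real.log (r ^ 2)) ^ (a + 2))) *
            (1 + |Real.log (a * (a + 1) /
              (r ^ 2 * (-Real.log (r ^ 2)) ^ (a + 2)))|) ^ p), subst_iff]
  refine Iff.trans ?_ (threshold (a * (a + 1)) a p hC ha hp)
  apply integrableOn_congr_fun _ measurableSet_Ioi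
  intro u hu
  simp only []
  have hu0 : 0 < u := lt_trans hb0 hu
  have hP : (0:ℝ) < u ^ (a + 2) := Real.rpow_pos_of_pos hu0 _
  have hr2 : Real.exp (-u/2) ^ 2 = Real.exp (-u) := by
    rw [pow_two, ← Real.exp_add, show -u/2 + -u/2 = -u by ring]
  rw [hr2, Real.log_exp, neg_neg]
  have hlogq : Real.log (a * (a + 1) / (Real.exp (-u) * u ^ (a + 2)))
      = Real.log (a * (a + 1)) + u - (a + 2) * Real.log u := by
    rw [Real.log_div hC.ne' (mul_pos (Real.exp_pos _) hP).ne',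
      Real.log_mul (Real.exp_ne_zero _) hP.ne', Real.log_exp, Real.log_rpow hu0]
    ring
  rw [hlogq]
  have h9 : Real.exp (-u/2) * Real.exp (-u/2) = Real.exp (-u) := by
    rw [← Real.exp_add, show -u/2 + -u/2 = -u by ring]
  set X : ℝ := (1 + |Real.log (a * (a + 1)) + u - (a + 2) * Real.log u|) ^ p with hX
  have h10 : u ^ (-(a+2)) = (u ^ (a+2))⁻¹ := Real.rpow_neg hu0.le _
  calc Real.exp (-u/2) / 2 * (Real.exp (-u/2) *
          (a * (a + 1) / (Real.exp (-u) * u ^ (a + 2)) * X))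
      = (Real.exp (-u/2) * Real.exp (-u/2)) *
          (a * (a + 1) / (Real.exp (-u) * u ^ (a + 2)) * X) / 2 := by ring
    _ = Real.exp (-u) * (a * (a + 1) / (Real.exp (-u) * u ^ (a + 2)) * X) / 2 := by rw [h9]
    _ = a * (a + 1) / 2 * u ^ (-(a+2)) * X := by
        rw [h10]
        field_simp
end
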